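/- Every monoid satisfying the identities x² = x and xyx = yx (i.e., every right regular band monoid) satisfies u = v for all pairs of words u, v over a finite alphabet with σ_u = σ_v, where σ_w records for each letter its position in the order of first occurrences when reading w right-to-left. -/

import Mathlib

/-- `sigmaW u x` is the number of distinct letters in the shortest suffix of
`u` containing `x` (the rank of `x` in the right-to-left order of first
occurrences). -/
def sigmaW {X : Type*} [DecidableEq X] (u : List X) (x : X) : ℕ :=
  ((u.reverse.take (u.reverse.idxOf x + 1)).dedup).length

namespace RRBAux

variable {X : Type*} [DecidableEq X]

/-- Dedup keeping *first* occurrences. -/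
def fd : List X → List X
  | [] => []
  | a :: t => a :: fd (t.filter (· ≠ a))
termination_by l => l.length
decreasing_by
  simp only [List.length_cons]
  rw [List.unattach_filter (g := (· ≠ a)) (hf := fun _ _ => rfl), List.unattach_attach]
  exact Nat.lt_succ_of_le (List.length_filter_le _ _)

theorem mem_fd (x : X) : ∀ r : List X, x ∈ fd r ↔ x ∈ r := by
  intro r
  induction r using fd.induct with
  | case1 => simp [fd]
  | case2 a t ih =>
    rw [List.unattach_filter (g := (· ≠ a)) (hf := fun _ _ => rfl), List.unattach_attach] at ih
    simp only [fd, List.mem_cons, ih, List.mem_filter, decide_eq_true_iff]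
    constructor
    · rintro (rfl | ⟨h, _⟩)
      · exact Or.inl rfl
      · exact Or.inr h
    · rintro (rfl | h)
      · exact Or.inl rfl
      · by_cases hxa : x = a
        · exact Or.inl hxa
        · exact Or.inr ⟨h, hxa⟩

theorem nodup_fd : ∀ r : List X, (fd r).Nodup := by
  intro r
  induction r using fd.induct with
  | case1 => simp [fd]
  | case2 a t ih =>
    rw [List.unattach_filter (g := (· ≠ a)) (hf := fun _ _ => rfl), List.unattach_attach] at ih
    rw [fd, List.nodup_cons]
    refine ⟨fun h => ?_, ih⟩
    rw [mem_fd] at h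
    simp at h

theorem filter_take (a x : X) : ∀ l : List X, x ∈ l → x ≠ a →
    (l.filter (· ≠ a)).take ((l.filter (· ≠ a)).idxOf x + 1)
      = (l.take (l.idxOf x + 1)).filter (· ≠ a) := by
  intro l
  induction l with
  | nil => simp
  | cons b s ih =>
    intro hx hxa
    by_cases hbx : x = b
    · subst hbx
      rw [List.idxOf_cons_self]
      have hfil : (x :: s).filter (· ≠ a) = x :: s.filter (· ≠ a) := by
        simp [List.filter_cons, hxa]
      rw [hfil, List.idxOf_cons_self]
      simp [List.filter_cons, hxa]
    · have hxs : x ∈ s := (List.mem_cons.1 hx).resolve_left hbx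
      rw [List.idxOf_cons_ne _ (fun h => hbx h.symm)]
      by_cases hba : b = a
      · have hfil : (b :: s).filter (· ≠ a) = s.filter (· ≠ a) := by
          simp [List.filter_cons, hba]
        rw [hfil, ih hxs hxa]
        simp [Nat.succ_eq_add_one, List.take_succ_cons, List.filter_cons, hba]
      · have hfil : (b :: s).filter (· ≠ a) = b :: s.filter (· ≠ a) := by
          simp [List.filter_cons, hba]
        rw [hfil, List.idxOf_cons_ne _ (fun h => hbx h.symm)]
        simp only [Nat.succ_eq_add_one, List.take_succ_cons, List.filter_cons]
        rw [ih hxs hxa]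
        simp [hba]

theorem card_insert_erase (s : Finset X) (a : X) :
    (insert a s).card = (s.erase a).card + 1 := by
  by_cases h : a ∈ s
  · rw [Finset.insert_eq_self.2 h, Finset.card_erase_of_mem h]
    have := Finset.card_pos.2 ⟨a, h⟩
    omega
  · rw [Finset.card_insert_of_notMem h, Finset.erase_eq_self.2 h]

theorem dedup_cons_filter_length (a : X) (p : List X) :
    (a :: p).dedup.length = (p.filter (· ≠ a)).dedup.length + 1 := by
  rw [← List.card_toFinset, ← List.card_toFinset]
  rw [List.toFinset_cons]
  have h2 : (p.filter (· ≠ a)).toFinset = p.toFinset.erase a := by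
    rw [List.toFinset_filter]
    ext y
    simp [Finset.mem_erase, and_comm]
  rw [h2, card_insert_erase]

theorem take_dedup_eq (x : X) : ∀ r : List X, x ∈ r →
    ((r.take (r.idxOf x + 1)).dedup).length = (fd r).idxOf x + 1 := by
  intro r
  induction r using fd.induct with
  | case1 => simp
  | case2 a t ih =>
    rw [List.unattach_filter (g := (· ≠ a)) (hf := fun _ _ => rfl), List.unattach_attach] at ih
    intro hx
    by_cases hxa : x = a
    · subst hxa
      rw [List.idxOf_cons_self, fd, List.idxOf_cons_self]
      simp
    · have hxt : x ∈ t := (List.mem_cons.1 hx).resolve_left hxa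
      have hxf : x ∈ t.filter (· ≠ a) := by
        simp [List.mem_filter, hxt, hxa]
      rw [List.idxOf_cons_ne _ (fun h => hxa h.symm), fd,
        List.idxOf_cons_ne _ (fun h => hxa h.symm)]
      simp only [Nat.succ_eq_add_one, List.take_succ_cons]
      rw [dedup_cons_filter_length, ← filter_take a x t hxt hxa, ih hxf]

theorem eq_of_indexOf_eq : ∀ l₁ l₂ : List X, l₁.Nodup → l₂.Nodup →
    (∀ x, x ∈ l₁ ↔ x ∈ l₂) → (∀ x ∈ l₁, l₁.idxOf x = l₂.idxOf x) →
    l₁ = l₂ := by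
  intro l₁
  induction l₁ with
  | nil =>
    intro l₂ _ _ hm _
    exact (List.eq_nil_iff_forall_not_mem.2 fun x hx => (List.not_mem_nil ((hm x).2 hx)).elim).symm
  | cons a t₁ ih =>
    intro l₂ h₁ h₂ hm hi
    have ha2 : a ∈ l₂ := (hm a).1 (List.mem_cons_self (a := a) (l := t₁))
    match l₂ with
    | [] => exact absurd ha2 (List.not_mem_nil (a := a))
    | b :: t₂ =>
      have hba : b = a := by
        by_contra hba
        have := hi a (List.mem_cons_self (a := a) (l := t₁))
        rw [List.idxOf_cons_self, List.idxOf_cons_ne _ hba] at this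
        exact Nat.succ_ne_zero _ this.symm
      subst hba
      have h₁' := List.nodup_cons.1 h₁
      have h₂' := List.nodup_cons.1 h₂
      congr 1
      refine ih t₂ h₁'.2 h₂'.2 (fun x => ?_) (fun x hx => ?_)
      · constructor
        · intro hx
          have hxb : x ≠ b := fun h => h₁'.1 (h ▸ hx)
          exact (List.mem_cons.1 ((hm x).1 (List.mem_cons_of_mem _ hx))).resolve_left hxb
        · intro hx
          have hxb : x ≠ b := fun h => h₂'.1 (h ▸ hx)
          exact (List.mem_cons.1 ((hm x).2 (List.mem_cons_of_mem _ hx))).resolve_left hxb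
      · have hxb : x ≠ b := fun h => h₁'.1 (h ▸ hx)
        have := hi x (List.mem_cons_of_mem _ hx)
        rw [List.idxOf_cons_ne _ (fun h => hxb h.symm),
          List.idxOf_cons_ne _ (fun h => hxb h.symm)] at this
        exact Nat.succ_injective this

section Alg

variable {M : Type*} [Monoid M]

theorem absorb (h2 : ∀ x y : M, x * y * x = y * x) (φ : X → M) (a : X) :
    ∀ t : List X, ∀ c : M, φ a * c = c →
    (t.reverse.map φ).prod * c = ((t.filter (· ≠ a)).reverse.map φ).prod * c := by
  intro t
  induction t with
  | nil => intro c _; simp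
  | cons b s ih =>
    intro c hc
    by_cases hba : b = a
    · subst hba
      have : (b :: s).filter (· ≠ b) = s.filter (· ≠ b) := by simp [List.filter_cons]
      rw [this]
      simp only [List.reverse_cons, List.map_append, List.prod_append, List.map_cons,
        List.map_nil, List.prod_cons, List.prod_nil, mul_one]
      rw [mul_assoc, hc]
      exact ih c hc
    · have hfil : (b :: s).filter (· ≠ a) = b :: s.filter (· ≠ a) := by
        simp [List.filter_cons, hba]
      rw [hfil]
      simp only [List.reverse_cons, List.map_append, List.prod_append, List.map_cons,
        List.map_nil, List.prod_cons, List.prod_nil, mul_one]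
      have habs : φ a * (φ b * c) = φ b * c := by
        conv_lhs => rw [← hc]
        calc φ a * (φ b * (φ a * c)) = φ a * φ b * φ a * c := by
              simp [mul_assoc]
          _ = φ b * φ a * c := by rw [h2]
          _ = φ b * (φ a * c) := by rw [mul_assoc]
          _ = φ b * c := by rw [hc]
      rw [mul_assoc, mul_assoc]
      exact ih (φ b * c) habs

theorem prod_fd (h1 : ∀ x : M, x * x = x) (h2 : ∀ x y : M, x * y * x = y * x)
    (φ : X → M) : ∀ t : List X, (t.reverse.map φ).prod = ((fd t).reverse.map φ).prod := by
  intro t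
  induction t using fd.induct with
  | case1 => simp [fd]
  | case2 a s ih =>
    rw [List.unattach_filter (g := (· ≠ a)) (hf := fun _ _ => rfl), List.unattach_attach] at ih
    rw [fd]
    simp only [List.reverse_cons, List.map_append, List.prod_append, List.map_cons,
      List.map_nil, List.prod_cons, List.prod_nil, mul_one]
    rw [absorb h2 φ a s (φ a) (h1 (φ a)), ih]

end Alg

end RRBAux

/-- Every monoid satisfying x² = x and xyx = yx (a right regular
band monoid) satisfies u = v whenever supp(u) = supp(v) and σ_u = σ_v. -/
theorem stmt_10 {X : Type*} [DecidableEq X] (u v : List X)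
    (hsupp : ∀ x : X, x ∈ u ↔ x ∈ v)
    (hsigma : ∀ x : X, sigmaW u x = sigmaW v x) :
    ∀ (M : Type*) [Monoid M],
      (∀ x : M, x * x = x) → (∀ x y : M, x * y * x = y * x) →
      ∀ φ : X → M, (u.map φ).prod = (v.map φ).prod := by
  intro M _ h1 h2 φ
  have key : RRBAux.fd u.reverse = RRBAux.fd v.reverse := by
    apply RRBAux.eq_of_indexOf_eq _ _ (RRBAux.nodup_fd _) (RRBAux.nodup_fd _)
    · intro x
      rw [RRBAux.mem_fd, RRBAux.mem_fd, List.mem_reverse, List.mem_reverse]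
      exact hsupp x
    · intro x hx
      have hxu : x ∈ u.reverse := (RRBAux.mem_fd x _).1 hx
      have hxv : x ∈ v.reverse := by
        rw [List.mem_reverse] at hxu ⊢; exact (hsupp x).1 hxu
      have e1 := RRBAux.take_dedup_eq x u.reverse hxu
      have e2 := RRBAux.take_dedup_eq x v.reverse hxv
      have := hsigma x
      unfold sigmaW at this
      omega
  have pu := RRBAux.prod_fd h1 h2 φ u.reverse
  have pv := RRBAux.prod_fd h1 h2 φ v.reverse
  rw [List.reverse_reverse] at pu pv
  rw [pu, pv, key]
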